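/- If D : S → M is a Jordan (δ,f)-derivation on a 2-torsion-free bimodule M satisfying D(x∘y) = D(x)∘'y + f(x)∘'δ(y), then D(y)x + f(y)δ(x) = yD(x) + δ(y)f(x) for all x, y ∈ S. -/
import Mathlib


open MulOpposite

/-- For a Jordan `(δ,f)`-derivation `D` on a `2`-torsion-free bimodule `M`
satisfying the Jordan product rule, `D(y)x + f(y)δ(x) = yD(x) + δ(y)f(x)`. -/
theorem jordan_derivation_symmetry
    {R S M : Type*} [CommRing R] [Ring S] [Algebra R S]
    [AddCommGroup M] [Module S M] [Module Sᵐᵒᵖ M] [SMulCommClass S Sᵐᵒᵖ M]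
    (htf : ∀ m : M, 2 • m = 0 → m = 0)
    (δ : S → S) (hδadd : ∀ a b : S, δ (a + b) = δ a + δ b)
    (hδmul : ∀ a b : S, δ (a * b) = δ a * b + a * δ b)
    (f : S → M) (hfadd : ∀ a b : S, f (a + b) = f a + f b)
    (hfleft : ∀ a x : S, f (a * x) = a • f x)
    (hfright : ∀ x a : S, f (x * a) = op a • f x)
    (D : S → M) (hDadd : ∀ a b : S, D (a + b) = D a + D b)
    (hJordan : ∀ x : S, D (x * x) = op x • D x + op (δ x) • f x)
    (hrule : ∀ x y : S, D (x * y + y * x) =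
      (op y • D x + y • D x) + (op (δ y) • f x + δ y • f x)) :
    ∀ x y : S, op x • D y + op (δ x) • f y = y • D x + δ y • f x := by
  intro x y
  have key := hJordan (x + y)
  rw [show (x + y) * (x + y) = x * x + (x * y + y * x) + y * y by rw [mul_add, add_mul, add_mul]; abel,
    hDadd, hDadd, hJordan, hJordan, hrule, hδadd, hfadd, hDadd] at key
  simp only [op_add, add_smul, smul_add] at key
  linear_combination (norm := abel) -key
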